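/- With T = tanh((S-s)/h) where S ∼ w_s, the second derivative of the perturbed calibration function η(s) = E_{w_s}[η₀] equals (1/h²)·(Cov_{w_s}(η₀(S), 2T² - 1) - 2·E_{w_s}[T]·Cov_{w_s}(η₀(S), T)). -/

import Mathlib

open Real MeasureTheory

/-- Sech kernel normalization constant `Z(u,h) = ∫₀¹ sech((t-u)/h) dt`. -/
noncomputable def Zker (u h : ℝ) : ℝ := ∫ t in (0:ℝ)..1, 1 / Real.cosh ((t - u) / h)

/-- Unnormalized kernel weight `(1/Z(u,h))·sech((s-u)/h)`. -/
noncomputable def kerW (h s u : ℝ) : ℝ := (1 / Zker u h) * (1 / Real.cosh ((s - u) / h))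

/-- Denominator `D(s) = ∫ (1/Z(u,h))·sech((s-u)/h) dμ(u)`. -/
noncomputable def Dfun (μ : Measure ℝ) (h s : ℝ) : ℝ := ∫ u, kerW h s u ∂μ

/-- Expectation of `A` under the reweighted measure `w_s` (density `kerW h s / D(s)` w.r.t. μ). -/
noncomputable def wExp (μ : Measure ℝ) (h s : ℝ) (A : ℝ → ℝ) : ℝ :=
  (∫ u, A u * kerW h s u ∂μ) / Dfun μ h s

/-- Covariance of `A` and `B` under `w_s`. -/
noncomputable def wCov (μ : Measure ℝ) (h s : ℝ) (A B : ℝ → ℝ) : ℝ :=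
  wExp μ h s (fun u => A u * B u) - wExp μ h s A * wExp μ h s B

/- ## Auxiliary lemmas -/

section Aux

lemma my_abs_sinh_le_cosh (x : ℝ) : |Real.sinh x| ≤ Real.cosh x := by
  rw [abs_le]
  constructor <;> nlinarith [Real.cosh_sq_sub_sinh_sq x, Real.cosh_pos x]

lemma my_abs_tanh_le_one (x : ℝ) : |Real.tanh x| ≤ 1 := by
  rw [Real.tanh_eq_sinh_div_cosh, abs_div, abs_of_pos (Real.cosh_pos x),
    div_le_one (Real.cosh_pos x)]
  exact my_abs_sinh_le_cosh x

lemma my_continuous_tanh : Continuous Real.tanh := by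
  have : Real.tanh = fun x => Real.sinh x / Real.cosh x :=
    funext fun y => Real.tanh_eq_sinh_div_cosh y
  rw [this]
  exact Real.continuous_sinh.div Real.continuous_cosh fun x => (Real.cosh_pos x).ne'

lemma my_hasDerivAt_tanh (x : ℝ) : HasDerivAt Real.tanh (1 - Real.tanh x ^ 2) x := by
  have h1 := (Real.hasDerivAt_sinh x).div (Real.hasDerivAt_cosh x) (Real.cosh_pos x).ne'
  have h2 : (Real.sinh / Real.cosh) = Real.tanh :=
    funext fun y => (Real.tanh_eq_sinh_div_cosh y).symm
  rw [h2] at h1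
  refine h1.congr_deriv ?_
  rw [Real.tanh_eq_sinh_div_cosh]
  have h3 := Real.cosh_sq_sub_sinh_sq x
  field_simp

variable {h : ℝ} (hh : 0 < h)

lemma sech_cont : Continuous fun p : ℝ × ℝ => 1 / Real.cosh ((p.2 - p.1) / h) :=
  continuous_const.div (Real.continuous_cosh.comp ((continuous_snd.sub continuous_fst).div_const h))
    fun p => (Real.cosh_pos _).ne'

lemma Zker_cont : Continuous fun u => Zker u h := by
  have := intervalIntegral.continuous_parametric_intervalIntegral_of_continuous'
    (μ := (volume : Measure ℝ)) (f := fun u t => 1 / Real.cosh ((t - u) / h))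
    (by exact sech_cont) 0 1
  simpa [Zker] using this

lemma Zker_pos (u : ℝ) : 0 < Zker u h := by
  refine intervalIntegral.intervalIntegral_pos_of_pos_on ?_ (fun t _ => by positivity) one_pos
  exact (Continuous.intervalIntegrable (by
    exact continuous_const.div (Real.continuous_cosh.comp (by fun_prop))
      fun t => (Real.cosh_pos _).ne') _ _)

lemma Zker_le_one (u : ℝ) : Zker u h ≤ 1 := by
  have : Zker u h ≤ ∫ _t in (0:ℝ)..1, (1:ℝ) := by
    refine intervalIntegral.integral_mono_on zero_le_one ?_ (by simp) fun t _ => ?_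
    · exact (Continuous.intervalIntegrable (continuous_const.div
        (Real.continuous_cosh.comp (by fun_prop)) fun t => (Real.cosh_pos _).ne') _ _)
    · rw [div_le_one (Real.cosh_pos _)]; exact Real.one_le_cosh _
  simpa using this

include hh in
lemma Zker_lb {u : ℝ} (hu : u ∈ Set.Icc (0:ℝ) 1) : 1 / Real.cosh (1 / h) ≤ Zker u h := by
  have : (∫ _t in (0:ℝ)..1, 1 / Real.cosh (1 / h)) ≤ Zker u h := by
    refine intervalIntegral.integral_mono_on zero_le_one (by simp) ?_ fun t ht => ?_
    · exact (Continuous.intervalIntegrable (continuous_const.div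
        (Real.continuous_cosh.comp (by fun_prop)) fun t => (Real.cosh_pos _).ne') _ _)
    · apply one_div_le_one_div_of_le (Real.cosh_pos _)
      rw [Real.cosh_le_cosh]
      rw [abs_div, abs_div, abs_of_pos hh]
      apply div_le_div_of_nonneg_right ?_ hh.le
      rw [abs_one, abs_le]
      obtain ⟨hu0, hu1⟩ := hu
      obtain ⟨ht0, ht1⟩ := ht
      constructor <;> linarith
  simpa using this

lemma kerW_pos (s u : ℝ) : 0 < kerW h s u :=
  mul_pos (one_div_pos.mpr (Zker_pos u)) (one_div_pos.mpr (Real.cosh_pos _))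

include hh in
lemma kerW_ub {u : ℝ} (hu : u ∈ Set.Icc (0:ℝ) 1) (s : ℝ) : kerW h s u ≤ Real.cosh (1 / h) := by
  have h1 : 1 / Zker u h ≤ Real.cosh (1 / h) := by
    rw [div_le_iff₀ (Zker_pos (h := h) u)]
    have := Zker_lb hh hu
    have hc := Real.cosh_pos (1 / h)
    calc (1:ℝ) = Real.cosh (1/h) * (1 / Real.cosh (1/h)) := by field_simp
    _ ≤ Real.cosh (1/h) * Zker u h := by
        exact mul_le_mul_of_nonneg_left this hc.le
  have h2 : 1 / Real.cosh ((s - u) / h) ≤ 1 := by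
    rw [div_le_one (Real.cosh_pos _)]; exact Real.one_le_cosh _
  calc kerW h s u ≤ Real.cosh (1/h) * 1 := by
        refine mul_le_mul h1 h2 (by positivity) (Real.cosh_pos _).le
  _ = Real.cosh (1/h) := mul_one _

include hh in
lemma kerW_lb {u : ℝ} (hu : u ∈ Set.Icc (0:ℝ) 1) (s : ℝ) :
    1 / Real.cosh ((|s| + 1) / h) ≤ kerW h s u := by
  have h1 : (1:ℝ) ≤ 1 / Zker u h := by
    rw [le_div_iff₀ (Zker_pos (h := h) u), one_mul]; exact Zker_le_one u
  have h2 : 1 / Real.cosh ((|s| + 1) / h) ≤ 1 / Real.cosh ((s - u) / h) := by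
    apply one_div_le_one_div_of_le (Real.cosh_pos _)
    rw [Real.cosh_le_cosh, abs_div, abs_div, abs_of_pos hh]
    apply div_le_div_of_nonneg_right ?_ hh.le
    rw [abs_of_nonneg (by positivity : (0:ℝ) ≤ |s| + 1)]
    obtain ⟨hu0, hu1⟩ := hu
    rw [abs_le]
    constructor
    · linarith [neg_abs_le s, abs_nonneg s]
    · linarith [le_abs_self s]
  calc 1 / Real.cosh ((|s| + 1) / h) = 1 * (1 / Real.cosh ((|s| + 1) / h)) := (one_mul _).symm
  _ ≤ (1 / Zker u h) * (1 / Real.cosh ((s - u) / h)) :=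
      mul_le_mul h1 h2 (by positivity) (by positivity)
  _ = kerW h s u := rfl

lemma kerW_cont (s : ℝ) : Continuous fun u => kerW h s u := by
  unfold kerW
  exact (continuous_const.div (Zker_cont (h := h)) fun u => (Zker_pos (h := h) u).ne').mul
    (continuous_const.div (Real.continuous_cosh.comp (by fun_prop))
      fun u => (Real.cosh_pos _).ne')

include hh in
lemma kerW_hasDerivAt (u s : ℝ) :
    HasDerivAt (fun s' => kerW h s' u)
      ((1 / h) * Real.tanh ((u - s) / h) * kerW h s u) s := by
  have hi : HasDerivAt (fun s' => (s' - u) / h) (1 / h) s := by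
    simpa using ((hasDerivAt_id s).sub_const u).div_const h
  have hc : HasDerivAt (fun s' => Real.cosh ((s' - u) / h))
      (Real.sinh ((s - u) / h) * (1 / h)) s := by
    simpa [Function.comp_def] using (Real.hasDerivAt_cosh ((s - u) / h)).comp s hi
  have hsech := (hasDerivAt_const s (1:ℝ)).div hc (Real.cosh_pos _).ne'
  have := hsech.const_mul (1 / Zker u h)
  refine this.congr_deriv ?_
  unfold kerW
  have hx : ((u - s) / h) = -((s - u) / h) := by ring
  rw [hx, Real.tanh_neg, Real.tanh_eq_sinh_div_cosh]
  have := Real.cosh_pos ((s - u) / h)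
  field_simp
  ring

include hh in
lemma kerT_hasDerivAt (u s : ℝ) :
    HasDerivAt (fun s' => (1 / h) * Real.tanh ((u - s') / h) * kerW h s' u)
      ((1 / h ^ 2) * (2 * Real.tanh ((u - s) / h) ^ 2 - 1) * kerW h s u) s := by
  have hi : HasDerivAt (fun s' => (u - s') / h) (-(1 / h)) s := by
    have := ((hasDerivAt_id s).const_sub u).div_const h
    simpa [neg_div] using this
  have hT : HasDerivAt (fun s' => Real.tanh ((u - s') / h))
      ((1 - Real.tanh ((u - s) / h) ^ 2) * -(1 / h)) s := by
    simpa [Function.comp_def] using (my_hasDerivAt_tanh ((u - s) / h)).comp s hi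
  have hTc : HasDerivAt (fun s' => (1 / h) * Real.tanh ((u - s') / h))
      ((1 / h) * ((1 - Real.tanh ((u - s) / h) ^ 2) * -(1 / h))) s := hT.const_mul (1 / h)
  have := hTc.mul (kerW_hasDerivAt hh u s)
  refine this.congr_deriv ?_
  ring

end Aux

section Integrals

variable (μ : Measure ℝ) [IsProbabilityMeasure μ]

/-- `∫ f·kerW dμ` -/
noncomputable def I0 (h s : ℝ) (f : ℝ → ℝ) : ℝ := ∫ u, f u * kerW h s u ∂μ

/-- `∫ f·(1/h)·tanh·kerW dμ` -/
noncomputable def I1 (h s : ℝ) (f : ℝ → ℝ) : ℝ :=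
  ∫ u, f u * ((1 / h) * Real.tanh ((u - s) / h) * kerW h s u) ∂μ

/-- `∫ f·(1/h²)(2tanh²-1)·kerW dμ` -/
noncomputable def I2 (h s : ℝ) (f : ℝ → ℝ) : ℝ :=
  ∫ u, f u * ((1 / h ^ 2) * (2 * Real.tanh ((u - s) / h) ^ 2 - 1) * kerW h s u) ∂μ

variable {μ}
variable (hsupp : μ (Set.Icc (0:ℝ) 1) = 1) {h : ℝ} (hh : 0 < h)
variable {f : ℝ → ℝ} (hf : Measurable f) (hfb : ∀ u ∈ Set.Icc (0:ℝ) 1, |f u| ≤ 1)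

include hsupp in
lemma ae_Icc : ∀ᵐ u ∂μ, u ∈ Set.Icc (0:ℝ) 1 := by
  have hcompl : μ (Set.Icc (0:ℝ) 1)ᶜ = 0 := by
    have := measure_compl (measurableSet_Icc (a := (0:ℝ)) (b := 1)) (measure_ne_top μ _)
    rw [hsupp, measure_univ] at this
    simpa using this
  rw [MeasureTheory.ae_iff]
  convert hcompl using 2
  rfl

include hsupp hh hf hfb in
lemma I0_integrable (s : ℝ) : Integrable (fun u => f u * kerW h s u) μ := by
  refine (integrable_const (Real.cosh (1 / h))).mono'
    (hf.aestronglyMeasurable.mul (kerW_cont (h := h) s).aestronglyMeasurable) ?_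
  filter_upwards [ae_Icc hsupp] with u hu
  rw [norm_mul, Real.norm_eq_abs, Real.norm_eq_abs, abs_of_pos (kerW_pos s u)]
  calc |f u| * kerW h s u ≤ 1 * Real.cosh (1 / h) :=
    mul_le_mul (hfb u hu) (kerW_ub hh hu s) (kerW_pos s u).le zero_le_one
  _ = Real.cosh (1 / h) := one_mul _

include hsupp hh hf hfb in
lemma I1_integrand_integrable (s : ℝ) :
    Integrable (fun u => f u * ((1 / h) * Real.tanh ((u - s) / h) * kerW h s u)) μ := by
  refine (integrable_const ((1 / h) * Real.cosh (1 / h))).mono'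
    (hf.aestronglyMeasurable.mul (Continuous.aestronglyMeasurable (by
      exact (continuous_const.mul (my_continuous_tanh.comp (by fun_prop))).mul
        (kerW_cont (h := h) s)))) ?_
  filter_upwards [ae_Icc hsupp] with u hu
  rw [norm_mul, Real.norm_eq_abs, Real.norm_eq_abs]
  calc |f u| * |(1 / h) * Real.tanh ((u - s) / h) * kerW h s u|
      ≤ 1 * ((1 / h) * Real.cosh (1 / h)) := by
        refine mul_le_mul (hfb u hu) ?_ (abs_nonneg _) zero_le_one
        rw [abs_mul, abs_mul, abs_of_pos (kerW_pos s u), abs_of_pos (by positivity : (0:ℝ) < 1/h)]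
        calc (1 / h) * |Real.tanh ((u - s) / h)| * kerW h s u
            ≤ (1 / h) * 1 * Real.cosh (1 / h) := by
              refine mul_le_mul (mul_le_mul_of_nonneg_left (my_abs_tanh_le_one _) (by positivity))
                (kerW_ub hh hu s) (kerW_pos s u).le (by positivity)
        _ = (1 / h) * Real.cosh (1 / h) := by ring
  _ = (1 / h) * Real.cosh (1 / h) := one_mul _

include hsupp hh hf hfb in
lemma I0_hasDerivAt (s : ℝ) :
    HasDerivAt (fun s' => I0 μ h s' f) (I1 μ h s f) s := by
  have key := hasDerivAt_integral_of_dominated_loc_of_deriv_le (μ := μ) (𝕜 := ℝ)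
    (F := fun s' u => f u * kerW h s' u)
    (F' := fun s' u => f u * ((1 / h) * Real.tanh ((u - s') / h) * kerW h s' u))
    (x₀ := s) (s := Metric.ball s 1) (bound := fun _ => (1 / h) * Real.cosh (1 / h)) (Metric.ball_mem_nhds s one_pos)
    (Filter.Eventually.of_forall fun s' =>
      hf.aestronglyMeasurable.mul (kerW_cont (h := h) s').aestronglyMeasurable)
    (I0_integrable hsupp hh hf hfb s)
    (hf.aestronglyMeasurable.mul (Continuous.aestronglyMeasurable (by
      exact (continuous_const.mul (my_continuous_tanh.comp (by fun_prop))).mul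
        (kerW_cont (h := h) s))))
    ?_ (integrable_const _) ?_
  · exact key.2
  · filter_upwards [ae_Icc hsupp] with u hu x _
    rw [norm_mul, Real.norm_eq_abs, Real.norm_eq_abs]
    calc |f u| * |(1 / h) * Real.tanh ((u - x) / h) * kerW h x u|
        ≤ 1 * ((1 / h) * Real.cosh (1 / h)) := by
          refine mul_le_mul (hfb u hu) ?_ (abs_nonneg _) zero_le_one
          rw [abs_mul, abs_mul, abs_of_pos (kerW_pos x u),
            abs_of_pos (by positivity : (0:ℝ) < 1/h)]
          calc (1 / h) * |Real.tanh ((u - x) / h)| * kerW h x u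
              ≤ (1 / h) * 1 * Real.cosh (1 / h) :=
                mul_le_mul (mul_le_mul_of_nonneg_left (my_abs_tanh_le_one _) (by positivity))
                  (kerW_ub hh hu x) (kerW_pos x u).le (by positivity)
          _ = (1 / h) * Real.cosh (1 / h) := by ring
    _ = (1 / h) * Real.cosh (1 / h) := one_mul _
  · refine Filter.Eventually.of_forall fun u => fun x _ => ?_
    exact (kerW_hasDerivAt hh u x).const_mul (f u)

include hsupp hh hf hfb in
lemma I1_hasDerivAt (s : ℝ) :
    HasDerivAt (fun s' => I1 μ h s' f) (I2 μ h s f) s := by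
  have key := hasDerivAt_integral_of_dominated_loc_of_deriv_le (μ := μ) (𝕜 := ℝ)
    (F := fun s' u => f u * ((1 / h) * Real.tanh ((u - s') / h) * kerW h s' u))
    (F' := fun s' u =>
      f u * ((1 / h ^ 2) * (2 * Real.tanh ((u - s') / h) ^ 2 - 1) * kerW h s' u))
    (x₀ := s) (s := Metric.ball s 1) (bound := fun _ => (1 / h ^ 2) * 3 * Real.cosh (1 / h)) (Metric.ball_mem_nhds s one_pos)
    (Filter.Eventually.of_forall fun s' =>
      hf.aestronglyMeasurable.mul (Continuous.aestronglyMeasurable (by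
        exact (continuous_const.mul (my_continuous_tanh.comp (by fun_prop))).mul
          (kerW_cont (h := h) s'))))
    (I1_integrand_integrable hsupp hh hf hfb s)
    (hf.aestronglyMeasurable.mul (Continuous.aestronglyMeasurable (by
      exact (continuous_const.mul (by
        exact (continuous_const.mul ((my_continuous_tanh.comp (by fun_prop)).pow 2)).sub
          continuous_const)).mul (kerW_cont (h := h) s))))
    ?_ (integrable_const _) ?_
  · exact key.2
  · filter_upwards [ae_Icc hsupp] with u hu x _
    rw [norm_mul, Real.norm_eq_abs, Real.norm_eq_abs]
    have htb : |2 * Real.tanh ((u - x) / h) ^ 2 - 1| ≤ 3 := by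
      have h1 := my_abs_tanh_le_one ((u - x) / h)
      have h2 : Real.tanh ((u - x) / h) ^ 2 ≤ 1 := by
        have := abs_le.mp h1
        nlinarith
      have h3 : (0:ℝ) ≤ Real.tanh ((u - x) / h) ^ 2 := sq_nonneg _
      rw [abs_le]; constructor <;> nlinarith
    calc |f u| * |(1 / h ^ 2) * (2 * Real.tanh ((u - x) / h) ^ 2 - 1) * kerW h x u|
        ≤ 1 * ((1 / h ^ 2) * 3 * Real.cosh (1 / h)) := by
          refine mul_le_mul (hfb u hu) ?_ (abs_nonneg _) zero_le_one
          rw [abs_mul, abs_mul, abs_of_pos (kerW_pos x u),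
            abs_of_pos (by positivity : (0:ℝ) < 1/h^2)]
          refine mul_le_mul (mul_le_mul_of_nonneg_left htb (by positivity))
            (kerW_ub hh hu x) (kerW_pos x u).le (by positivity)
    _ = (1 / h ^ 2) * 3 * Real.cosh (1 / h) := one_mul _
  · refine Filter.Eventually.of_forall fun u => fun x _ => ?_
    exact (kerT_hasDerivAt hh u x).const_mul (f u)

include hsupp hh in
lemma Dfun_pos (s : ℝ) : 0 < Dfun μ h s := by
  have hint : Integrable (fun u => kerW h s u) μ := by
    have := I0_integrable (f := fun _ => (1:ℝ)) hsupp hh measurable_const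
      (fun u _ => by simp) s
    simpa using this
  have hlb : (1 / Real.cosh ((|s| + 1) / h)) ≤ Dfun μ h s := by
    have := integral_mono_ae (μ := μ) (integrable_const (1 / Real.cosh ((|s| + 1) / h))) hint
      (by filter_upwards [ae_Icc hsupp] with u hu; exact kerW_lb hh hu s)
    simpa [Dfun] using this
  exact lt_of_lt_of_le (by positivity) hlb

lemma I1_eq (s : ℝ) (f : ℝ → ℝ) :
    I1 μ h s f = (1 / h) * I0 μ h s (fun u => f u * Real.tanh ((u - s) / h)) := by
  unfold I1 I0
  rw [← integral_const_mul]
  congr 1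
  funext u
  ring

lemma I2_eq (s : ℝ) (f : ℝ → ℝ) :
    I2 μ h s f
      = (1 / h ^ 2) * I0 μ h s (fun u => f u * (2 * Real.tanh ((u - s) / h) ^ 2 - 1)) := by
  unfold I2 I0
  rw [← integral_const_mul]
  congr 1
  funext u
  ring

end Integrals

theorem perturbed_calibration_second_deriv_cov
    (μ : Measure ℝ) [IsProbabilityMeasure μ] (hsupp : μ (Set.Icc (0:ℝ) 1) = 1)
    (η₀ : ℝ → ℝ) (hη₀meas : Measurable η₀) (hη₀b : ∀ u ∈ Set.Icc (0:ℝ) 1, η₀ u ∈ Set.Icc (0:ℝ) 1)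
    (h : ℝ) (hh : 0 < h) (s : ℝ) (hs : s ∈ Set.Icc (0:ℝ) 1) :
    deriv (deriv (fun s' => wExp μ h s' η₀)) s
      = (1 / h ^ 2) *
          (wCov μ h s η₀ (fun u => 2 * Real.tanh ((u - s) / h) ^ 2 - 1)
            - 2 * wExp μ h s (fun u => Real.tanh ((u - s) / h))
                * wCov μ h s η₀ (fun u => Real.tanh ((u - s) / h))) := by
  have hηb : ∀ u ∈ Set.Icc (0:ℝ) 1, |η₀ u| ≤ 1 := fun u hu => by
    obtain ⟨h0, h1⟩ := hη₀b u hu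
    rw [abs_le]; constructor <;> linarith
  have honeb : ∀ u ∈ Set.Icc (0:ℝ) 1, |(fun _ => (1:ℝ)) u| ≤ 1 := fun u _ => by simp
  have hone : Measurable (fun _ : ℝ => (1:ℝ)) := measurable_const
  -- D = I0 of the constant function 1
  have hDeq : ∀ s', Dfun μ h s' = I0 μ h s' (fun _ => 1) := fun s' => by
    simp [Dfun, I0]
  have hDpos : ∀ s', 0 < I0 μ h s' (fun _ : ℝ => (1:ℝ)) := fun s' => by
    rw [← hDeq]; exact Dfun_pos hsupp hh s'
  -- rewrite the function whose derivative we take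
  have hw : (fun s' => wExp μ h s' η₀)
      = fun s' => I0 μ h s' η₀ / I0 μ h s' (fun _ => 1) := by
    funext s'
    rw [show wExp μ h s' η₀ = (∫ u, η₀ u * kerW h s' u ∂μ) / Dfun μ h s' from rfl, hDeq]
    rfl
  rw [hw]
  -- first derivative everywhere
  have hd1 : deriv (fun s' => I0 μ h s' η₀ / I0 μ h s' (fun _ => 1))
      = fun s' => (I1 μ h s' η₀ * I0 μ h s' (fun _ => 1)
          - I0 μ h s' η₀ * I1 μ h s' (fun _ => 1)) / (I0 μ h s' (fun _ => 1)) ^ 2 := by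
    funext s'
    exact ((I0_hasDerivAt hsupp hh hη₀meas hηb s').div
      (I0_hasDerivAt hsupp hh hone honeb s') (hDpos s').ne').deriv
  rw [hd1]
  -- second derivative at s
  have hNf := I0_hasDerivAt hsupp hh hη₀meas hηb s
  have hNg := I0_hasDerivAt hsupp hh hone honeb s
  have hTf := I1_hasDerivAt hsupp hh hη₀meas hηb s
  have hTg := I1_hasDerivAt hsupp hh hone honeb s
  have hnum : HasDerivAt (fun s' => I1 μ h s' η₀ * I0 μ h s' (fun _ => 1)
      - I0 μ h s' η₀ * I1 μ h s' (fun _ => 1))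
      ((I2 μ h s η₀ * I0 μ h s (fun _ => 1) + I1 μ h s η₀ * I1 μ h s (fun _ => 1))
        - (I1 μ h s η₀ * I1 μ h s (fun _ => 1) + I0 μ h s η₀ * I2 μ h s (fun _ => 1))) s :=
    (hTf.mul hNg).sub (hNf.mul hTg)
  have hden : HasDerivAt (fun s' => (I0 μ h s' (fun _ => 1)) ^ 2)
      (2 * I0 μ h s (fun _ => 1) ^ 1 * I1 μ h s (fun _ => 1)) s := hNg.pow 2
  have htot := hnum.div hden (pow_ne_zero 2 (hDpos s).ne')
  erw [htot.deriv]
  -- final algebra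
  have e1 := I1_eq (μ := μ) (h := h) s η₀
  have e2 := I2_eq (μ := μ) (h := h) s η₀
  have e3 := I1_eq (μ := μ) (h := h) s (fun _ => 1)
  have e4 := I2_eq (μ := μ) (h := h) s (fun _ => 1)
  have e5 : I0 μ h s (fun u => (fun _ : ℝ => (1:ℝ)) u * Real.tanh ((u - s) / h))
      = I0 μ h s (fun u => Real.tanh ((u - s) / h)) := by simp [I0]
  have e6 : I0 μ h s (fun u => (fun _ : ℝ => (1:ℝ)) u * (2 * Real.tanh ((u - s) / h) ^ 2 - 1))
      = I0 μ h s (fun u => 2 * Real.tanh ((u - s) / h) ^ 2 - 1) := by simp [I0]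
  rw [e5] at e3
  rw [e6] at e4
  rw [e1, e2, e3, e4]
  simp only [wCov, wExp]
  simp only [hDeq]
  have hI0eq1 : (∫ u, η₀ u * (2 * Real.tanh ((u - s) / h) ^ 2 - 1) * kerW h s u ∂μ)
      = I0 μ h s (fun u => η₀ u * (2 * Real.tanh ((u - s) / h) ^ 2 - 1)) := rfl
  have hI0eq2 : (∫ u, η₀ u * Real.tanh ((u - s) / h) * kerW h s u ∂μ)
      = I0 μ h s (fun u => η₀ u * Real.tanh ((u - s) / h)) := rfl
  have hI0eq3 : (∫ u, η₀ u * kerW h s u ∂μ) = I0 μ h s η₀ := rfl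
  have hI0eq4 : (∫ u, Real.tanh ((u - s) / h) * kerW h s u ∂μ)
      = I0 μ h s (fun u => Real.tanh ((u - s) / h)) := rfl
  have hI0eq5 : (∫ u, (2 * Real.tanh ((u - s) / h) ^ 2 - 1) * kerW h s u ∂μ)
      = I0 μ h s (fun u => 2 * Real.tanh ((u - s) / h) ^ 2 - 1) := rfl
  rw [hI0eq1, hI0eq2, hI0eq3, hI0eq4, hI0eq5]
  set a := I0 μ h s η₀
  set b := I0 μ h s (fun u => η₀ u * Real.tanh ((u - s) / h))
  set c := I0 μ h s (fun u => η₀ u * (2 * Real.tanh ((u - s) / h) ^ 2 - 1))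
  set d := I0 μ h s (fun _ : ℝ => (1:ℝ))
  set e := I0 μ h s (fun u => Real.tanh ((u - s) / h))
  set f := I0 μ h s (fun u => 2 * Real.tanh ((u - s) / h) ^ 2 - 1)
  have hd0 : d ≠ 0 := (hDpos s).ne'
  field_simp
  ring
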